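/- Let g : 𝒞 → 𝒟 be a morphism of crossed modules of groupoids 𝒞 = (C, G, δ) over X and 𝒟 = (D, H, δ'), let (s₀, s₁) be a homotopy on g, and define f₁(a) = s₀(α(a)) + g₁(a) + δ'(s₁(a)) - s₀(β(a)) and f₂(c) = (g₂(c) + s₁(δ(c)))^{-s₀(β(c))}. Then for all c ∈ C(x) and a ∈ G(x,y) one has f₂(c^a) = f₂(c)^{f₁(a)}. -/

import Mathlib

open CategoryTheory

/-- A crossed module of groupoids `(C, G, δ)` over the object type `X`.
The groupoid `G` is encoded by a `Groupoid` structure on `X` (arrows `x ⟶ y`,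
composition `a ≫ b` corresponding to the additive composition `a + b` of the paper,
with source `α` and target `β` built into the typing).
`C` is the totally intransitive groupoid, i.e. a family of groups `C x`
(written multiplicatively; the paper writes them additively). -/
structure XMod (X : Type*) [Groupoid X] where
  /-- the family of groups `C x` -/
  C : X → Type*
  grp : ∀ x : X, Group (C x)
  /-- the right action `c ^ a` of `G` on `C` -/
  act : ∀ {x y : X}, C x → (x ⟶ y) → C y
  act_mul : ∀ {x y : X} (c c' : C x) (a : x ⟶ y), act (c * c') a = act c a * act c' a
  act_comp : ∀ {x y z : X} (c : C x) (a : x ⟶ y) (b : y ⟶ z), act c (a ≫ b) = act (act c a) b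
  act_id : ∀ {x : X} (c : C x), act c (𝟙 x) = c
  /-- the boundary `δ : C x → G(x,x)` -/
  δ : ∀ {x : X}, C x → (x ⟶ x)
  δ_mul : ∀ {x : X} (c c' : C x), δ (c * c') = δ c ≫ δ c'
  δ_act : ∀ {x y : X} (c : C x) (a : x ⟶ y), δ (act c a) = Groupoid.inv a ≫ δ c ≫ a
  peiffer : ∀ {x : X} (c c' : C x), act c (δ c') = c'⁻¹ * c * c'

attribute [instance] XMod.grp

/-- A morphism `g = (g₀, g₁, g₂) : 𝒞 → 𝒟` of crossed modules of groupoids: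
a functor `(g₀, g₁) : G → H` together with a family of group homomorphisms
`g₂ : C x → D (g₀ x)` commuting with `δ` and the actions. -/
structure XModHom {X : Type*} {Y : Type*} [Groupoid X] [Groupoid Y]
    (𝒞 : XMod X) (𝒟 : XMod Y) where
  F : X ⥤ Y
  map₂ : ∀ {x : X}, 𝒞.C x → 𝒟.C (F.obj x)
  map₂_mul : ∀ (x : X) (c c' : 𝒞.C x), map₂ (c * c') = map₂ c * map₂ c'
  map₂_δ : ∀ (x : X) (c : 𝒞.C x), 𝒟.δ (map₂ c) = F.map (𝒞.δ c)
  map₂_act : ∀ (x y : X) (c : 𝒞.C x) (a : x ⟶ y),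
    map₂ (𝒞.act c a) = 𝒟.act (map₂ c) (F.map a)

/-- A homotopy `(s₀, s₁)` on a morphism `g : 𝒞 → 𝒟` of crossed modules of groupoids:
`s₀ : X → H` with `β (s₀ x) = g₀ x` (the source `α (s₀ x)` being denoted `f₀ x`),
and `s₁ : G → D`, a `g`-derivation: `s₁ a ∈ D (β (g₁ a))` and
`s₁ (a + b) = (s₁ a) ^ (g₁ b) + s₁ b`. -/
structure XModHomotopy {X : Type*} {Y : Type*} [Groupoid X] [Groupoid Y]
    {𝒞 : XMod X} {𝒟 : XMod Y} (g : XModHom 𝒞 𝒟) where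
  f₀ : X → Y
  s₀ : ∀ x : X, f₀ x ⟶ g.F.obj x
  s₁ : ∀ {x y : X}, (x ⟶ y) → 𝒟.C (g.F.obj y)
  s₁_comp : ∀ (x y z : X) (a : x ⟶ y) (b : y ⟶ z),
    s₁ (a ≫ b) = 𝒟.act (s₁ a) (g.F.map b) * s₁ b

namespace XModHomotopy

variable {X : Type*} {Y : Type*} [Groupoid X] [Groupoid Y]
  {𝒞 : XMod X} {𝒟 : XMod Y} {g : XModHom 𝒞 𝒟}

/-- `f₁ a = s₀ (α a) + g₁ a + δ' (s₁ a) - s₀ (β a)`  (note `f₀ x = α (s₀ x)`). -/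
def map₁ (s : XModHomotopy g) {x y : X} (a : x ⟶ y) : s.f₀ x ⟶ s.f₀ y :=
  s.s₀ x ≫ g.F.map a ≫ 𝒟.δ (s.s₁ a) ≫ Groupoid.inv (s.s₀ y)

/-- `f₂ c = (g₂ c + s₁ (δ c)) ^ (- s₀ (β c))`. -/
def map₂ (s : XModHomotopy g) {x : X} (c : 𝒞.C x) : 𝒟.C (s.f₀ x) :=
  𝒟.act (g.map₂ c * s.s₁ (𝒞.δ c)) (Groupoid.inv (s.s₀ x))

end XModHomotopy


section Aux

variable {X : Type*} {Y : Type*} [Groupoid X] [Groupoid Y]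
  {𝒞 : XMod X} {𝒟 : XMod Y} {g : XModHom 𝒞 𝒟}

lemma XMod.act_one {x y : X} (a : x ⟶ y) : 𝒞.act 1 a = 1 := by
  have h := 𝒞.act_mul (1 : 𝒞.C x) 1 a
  rw [mul_one] at h
  exact right_eq_mul.mp h

lemma XMod.act_inv {x y : X} (c : 𝒞.C x) (a : x ⟶ y) :
    𝒞.act c⁻¹ a = (𝒞.act c a)⁻¹ := by
  have h := 𝒞.act_mul c⁻¹ c a
  rw [inv_mul_cancel, XMod.act_one] at h
  exact eq_inv_of_mul_eq_one_left h.symm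

lemma XModHomotopy.s₁_id (s : XModHomotopy g) (x : X) : s.s₁ (𝟙 x) = 1 := by
  have h := s.s₁_comp x x x (𝟙 x) (𝟙 x)
  rw [Category.comp_id, g.F.map_id, 𝒟.act_id] at h
  exact right_eq_mul.mp h

lemma XModHomotopy.s₁_inv_act (s : XModHomotopy g) {x y : X} (a : x ⟶ y) :
    𝒟.act (s.s₁ (Groupoid.inv a)) (g.F.map a) = (s.s₁ a)⁻¹ := by
  have h := s.s₁_comp y x y (Groupoid.inv a) a
  rw [Groupoid.inv_comp, s.s₁_id] at h
  exact eq_inv_of_mul_eq_one_left h.symm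

end Aux

/-- Let `g : 𝒞 → 𝒟` be a morphism of crossed modules of groupoids,
`(s₀, s₁)` a homotopy on `g`, and define
`f₁ a = s₀ (α a) + g₁ a + δ' (s₁ a) - s₀ (β a)` and
`f₂ c = (g₂ c + s₁ (δ c)) ^ (- s₀ (β c))`.
Then for all `c ∈ C x` and `a : x ⟶ y` one has `f₂ (c ^ a) = (f₂ c) ^ (f₁ a)`. -/
theorem homotopy_map₂_act {X : Type*} {Y : Type*} [Groupoid X] [Groupoid Y]
    {𝒞 : XMod X} {𝒟 : XMod Y} (g : XModHom 𝒞 𝒟) (s : XModHomotopy g) :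
    ∀ (x y : X) (c : 𝒞.C x) (a : x ⟶ y),
      s.map₂ (𝒞.act c a) = 𝒟.act (s.map₂ c) (s.map₁ a) := by
  intro x y c a
  unfold XModHomotopy.map₂ XModHomotopy.map₁
  rw [← 𝒟.act_comp, ← Category.assoc (Groupoid.inv (s.s₀ x)),
    Groupoid.inv_comp, Category.id_comp]
  -- reduce to the key equation inside the action by `inv (s₀ y)`
  have key : g.map₂ (𝒞.act c a) * s.s₁ (𝒞.δ (𝒞.act c a))
      = 𝒟.act (g.map₂ c * s.s₁ (𝒞.δ c)) (g.F.map a ≫ 𝒟.δ (s.s₁ a)) := by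
    rw [𝒟.act_comp, 𝒟.peiffer, 𝒟.act_mul, g.map₂_act, 𝒞.δ_act,
      s.s₁_comp _ _ _ (Groupoid.inv a) (𝒞.δ c ≫ a), s.s₁_comp _ _ _ (𝒞.δ c) a,
      g.F.map_comp, 𝒟.act_comp, ← g.map₂_δ, 𝒟.peiffer, 𝒟.act_mul, 𝒟.act_mul,
      XMod.act_inv, s.s₁_inv_act]
    group
  rw [key, ← 𝒟.act_comp, Category.assoc]
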